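/- The compacting operator is multiplicative for the shifted concatenation: for all lists l₁, l₂ ∈ L one has cpt(l₁ ∗̄ l₂) = cpt(l₁) ∗̄ cpt(l₂). -/

import Mathlib

open scoped TensorProduct

/-- A monomial: a nonzero finitely supported multi-index with support contained in `{1,2,…}`. -/
def Mon : Type := {m : ℕ →₀ ℕ // m ≠ 0 ∧ m 0 = 0}

namespace Mon

/-- Product of monomials: pointwise addition of multi-indices. -/
noncomputable instance : Mul Mon :=
  ⟨fun a b =>
    ⟨a.1 + b.1, by
      constructor
      · intro h
        exact a.2.1 ((add_eq_zero.mp h).1)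
      · simp [Finsupp.add_apply, a.2.2, b.2.2]⟩⟩

/-- The total degree (weight) of a monomial. -/
def w (m : Mon) : ℕ := m.1.sum fun _ v => v

/-- The set of variable indices occurring in a list of monomials. -/
def IndAlph (l : List Mon) : Finset ℕ := (l.map fun m => m.1.support).foldr (· ∪ ·) ∅

/-- The maximal variable index occurring in a list of monomials (`0` for the empty list). -/
def maxInd (l : List Mon) : ℕ := (IndAlph l).sup id

/-- The embedding `i ↦ i + p` of `ℕ` into itself. -/
def addEmb (p : ℕ) : ℕ ↪ ℕ := ⟨fun i => i + p, fun a b h => by simpa using h⟩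

/-- The shift `T_p` of a monomial: translate the support by `p`. -/
noncomputable def Tmon (p : ℕ) (m : Mon) : Mon :=
  ⟨m.1.embDomain (addEmb p), by
    refine ⟨fun h => m.2.1 (Finsupp.embDomain_eq_zero.mp h), ?_⟩
    by_cases hp : p = 0
    · subst hp
      have h0 : (Finsupp.embDomain (addEmb 0) m.1) ((addEmb 0) 0) = m.1 0 :=
        Finsupp.embDomain_apply_self _ _ _
      simpa [addEmb] using h0.trans m.2.2
    · apply Finsupp.embDomain_of_notMem_range
      rintro ⟨i, hi⟩
      have hi' : i + p = 0 := hi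
      omega⟩

/-- Shifted concatenation of lists of monomials. -/
noncomputable def sconc (l₁ l₂ : List Mon) : List Mon := l₁ ++ l₂.map (Tmon (maxInd l₁))

/-- A list of monomials is compact when its alphabet has no holes:
`IndAlph l = {1,…,card (IndAlph l)}`. -/
def Compact (l : List Mon) : Prop := IndAlph l = Finset.Icc 1 (IndAlph l).card

/-- The re-indexing function of a list `l` : on `IndAlph l` it is the unique strictly
increasing bijection onto `{1,…,card (IndAlph l)}` (extended injectively elsewhere). -/
noncomputable def phi (l : List Mon) (i : ℕ) : ℕ :=
  if h : i ∈ IndAlph l then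
    (((IndAlph l).orderIsoOfFin rfl).symm ⟨i, h⟩ : Fin (IndAlph l).card) + 1
  else i + (IndAlph l).card + 1

lemma phi_pos (l : List Mon) (i : ℕ) : 1 ≤ phi l i := by
  unfold phi; split_ifs <;> omega

lemma phi_inj (l : List Mon) : Function.Injective (phi l) := by
  intro a b hab
  unfold phi at hab
  split_ifs at hab with ha hb hb
  · have h1 : (((IndAlph l).orderIsoOfFin rfl).symm ⟨a, ha⟩) =
        (((IndAlph l).orderIsoOfFin rfl).symm ⟨b, hb⟩) := Fin.ext (by omega)
    have h2 := congrArg ((IndAlph l).orderIsoOfFin rfl) h1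
    rw [OrderIso.apply_symm_apply, OrderIso.apply_symm_apply] at h2
    exact congrArg Subtype.val h2
  · have := (((IndAlph l).orderIsoOfFin rfl).symm ⟨a, ha⟩).isLt; omega
  · have := (((IndAlph l).orderIsoOfFin rfl).symm ⟨b, hb⟩).isLt; omega
  · omega

/-- Action of the compacting operator of `l` on a single monomial. -/
noncomputable def cptMon (l : List Mon) (m : Mon) : Mon :=
  ⟨m.1.mapDomain (phi l), by
    constructor
    · intro h
      apply m.2.1
      exact Finsupp.mapDomain_injective (phi_inj l) (by simpa using h)
    · apply Finsupp.mapDomain_of_notMem_range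
      rintro ⟨i, hi⟩
      have := phi_pos l i
      omega⟩

/-- The compacting operator on lists of monomials. -/
noncomputable def cpt (l : List Mon) : List Mon := l.map (cptMon l)

/-- `sub l I` is the sublist of `l` consisting of the entries whose (1-based) position
belongs to `I`. -/
def sub (l : List Mon) (I : Finset ℕ) : List Mon :=
  (List.range l.length).filterMap fun j => if j + 1 ∈ I then l[j]? else none

/-- `∗̄`-irreducible lists: nonempty and with no factorization into two nonempty lists. -/
def SIrred (l : List Mon) : Prop :=
  l ≠ [] ∧ ∀ u v : List Mon, l = sconc u v → u = [] ∨ v = []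

end Mon

namespace Mon

lemma IndAlph_cons (a : Mon) (l : List Mon) :
    IndAlph (a :: l) = a.1.support ∪ IndAlph l := rfl

lemma mem_IndAlph {l : List Mon} {i : ℕ} :
    i ∈ IndAlph l ↔ ∃ m ∈ l, i ∈ m.1.support := by
  induction l with
  | nil => simp [IndAlph]
  | cons a l ih => simp [IndAlph_cons, ih]

lemma supp_subset_IndAlph {l : List Mon} {m : Mon} (hm : m ∈ l) :
    m.1.support ⊆ IndAlph l := fun i hi => mem_IndAlph.mpr ⟨m, hm, hi⟩

lemma IndAlph_append (l₁ l₂ : List Mon) :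
    IndAlph (l₁ ++ l₂) = IndAlph l₁ ∪ IndAlph l₂ := by
  ext i; simp [mem_IndAlph, or_and_right, exists_or]

lemma Tmon_support (p : ℕ) (m : Mon) :
    (Tmon p m).1.support = m.1.support.map (addEmb p) :=
  Finsupp.support_embDomain _ _

lemma IndAlph_map_Tmon (p : ℕ) (l : List Mon) :
    IndAlph (l.map (Tmon p)) = (IndAlph l).map (addEmb p) := by
  ext i
  simp only [mem_IndAlph, List.mem_map, Finset.mem_map]
  constructor
  · rintro ⟨_, ⟨m, hm, rfl⟩, hi⟩
    rw [Tmon_support] at hi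
    obtain ⟨j, hj, rfl⟩ := Finset.mem_map.mp hi
    exact ⟨j, ⟨m, hm, hj⟩, rfl⟩
  · rintro ⟨j, hj, rfl⟩
    obtain ⟨m, hm, hjm⟩ := hj
    exact ⟨Tmon p m, ⟨m, hm, rfl⟩, by rw [Tmon_support]; exact Finset.mem_map_of_mem _ hjm⟩

lemma one_le_of_mem_IndAlph {l : List Mon} {i : ℕ} (h : i ∈ IndAlph l) : 1 ≤ i := by
  obtain ⟨m, _, hi⟩ := mem_IndAlph.mp h
  rcases Nat.eq_zero_or_pos i with rfl | h1
  · exact absurd m.2.2 (Finsupp.mem_support_iff.mp hi)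
  · exact h1

lemma le_maxInd {l : List Mon} {i : ℕ} (h : i ∈ IndAlph l) : i ≤ maxInd l :=
  Finset.le_sup (f := id) h

/-- Characterization of `phi` via the order embedding. -/
lemma phi_eq {l : List Mon} {i : ℕ} (h : i ∈ IndAlph l) {S : Finset ℕ}
    (hS : IndAlph l = S) {n : ℕ} (hcard : S.card = n) {k : Fin n}
    (hk : S.orderEmbOfFin hcard k = i) : phi l i = (k : ℕ) + 1 := by
  subst hS
  have h1 : (IndAlph l).orderEmbOfFin rfl (((IndAlph l).orderIsoOfFin rfl).symm ⟨i, h⟩) = i := by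
    rw [← Finset.coe_orderIsoOfFin_apply, OrderIso.apply_symm_apply]
  have h2 : ((((IndAlph l).orderIsoOfFin rfl).symm ⟨i, h⟩ : Fin _) : ℕ) = (k : ℕ) :=
    Finset.orderEmbOfFin_eq_orderEmbOfFin_iff.mp (h1.trans hk.symm)
  rw [phi, dif_pos h, h2]

section Union

variable {A B : Finset ℕ} (hlt : ∀ a ∈ A, ∀ b ∈ B, a < b)

include hlt

lemma card_union_lt : (A ∪ B).card = A.card + B.card := by
  rw [Finset.card_union_of_disjoint]
  exact Finset.disjoint_left.mpr fun a ha hb => lt_irrefl a (hlt a ha a hb)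

lemma orderEmbOfFin_union (k : Fin (A.card + B.card)) :
    (A ∪ B).orderEmbOfFin (card_union_lt hlt) k =
      if hk : (k : ℕ) < A.card then A.orderEmbOfFin rfl ⟨k, hk⟩
      else B.orderEmbOfFin rfl ⟨(k : ℕ) - A.card, by omega⟩ := by
  have key := Finset.orderEmbOfFin_unique (f := fun k : Fin (A.card + B.card) =>
      if hk : (k : ℕ) < A.card then A.orderEmbOfFin rfl ⟨k, hk⟩
      else B.orderEmbOfFin rfl ⟨(k : ℕ) - A.card, by omega⟩) (card_union_lt hlt)
      (fun x => ?_) ?_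
  · exact (congrFun key k).symm
  · split_ifs with hk
    · exact Finset.mem_union_left _ (Finset.orderEmbOfFin_mem _ _ _)
    · exact Finset.mem_union_right _ (Finset.orderEmbOfFin_mem _ _ _)
  · intro x y hxy
    have hxy' : (x : ℕ) < (y : ℕ) := hxy
    dsimp only
    split_ifs with hx hy hy
    · exact (A.orderEmbOfFin rfl).strictMono (show Fin.mk _ _ < Fin.mk _ _ from hxy')
    · exact hlt _ (Finset.orderEmbOfFin_mem _ _ _) _ (Finset.orderEmbOfFin_mem _ _ _)
    · omega
    · exact (B.orderEmbOfFin rfl).strictMono (show Fin.mk _ _ < Fin.mk _ _ from by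
        simp only [Fin.mk_lt_mk]; omega)

end Union

lemma IndAlph_sconc (l₁ l₂ : List Mon) :
    IndAlph (sconc l₁ l₂) = IndAlph l₁ ∪ (IndAlph l₂).map (addEmb (maxInd l₁)) := by
  rw [sconc, IndAlph_append, IndAlph_map_Tmon]

lemma sconc_lt (l₁ l₂ : List Mon) :
    ∀ a ∈ IndAlph l₁, ∀ b ∈ (IndAlph l₂).map (addEmb (maxInd l₁)), a < b := by
  intro a ha b hb
  obtain ⟨j, hj, rfl⟩ := Finset.mem_map.mp hb
  have := le_maxInd ha
  have := one_le_of_mem_IndAlph hj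
  show a < j + maxInd l₁
  omega

lemma orderEmbOfFin_map_addEmb (C : Finset ℕ) (p : ℕ) (k : Fin C.card) :
    (C.map (addEmb p)).orderEmbOfFin (Finset.card_map _) k = C.orderEmbOfFin rfl k + p := by
  have key := Finset.orderEmbOfFin_unique (f := fun k : Fin C.card =>
      C.orderEmbOfFin rfl k + p) (Finset.card_map (f := addEmb p) (s := C))
      (fun x => by
        exact Finset.mem_map_of_mem (addEmb p)
          (Finset.orderEmbOfFin_mem C rfl x))
      (fun x y hxy => by
        have := (C.orderEmbOfFin rfl).strictMono hxy
        simpa using this)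
  exact (congrFun key k).symm

lemma phi_sconc_left {l₁ l₂ : List Mon} {i : ℕ} (h : i ∈ IndAlph l₁) :
    phi (sconc l₁ l₂) i = phi l₁ i := by
  have hlt := sconc_lt l₁ l₂
  set A := IndAlph l₁ with hA
  set B := (IndAlph l₂).map (addEmb (maxInd l₁)) with hB
  have hS : IndAlph (sconc l₁ l₂) = A ∪ B := IndAlph_sconc l₁ l₂
  set k : Fin A.card := (A.orderIsoOfFin rfl).symm ⟨i, h⟩ with hk
  have hki : A.orderEmbOfFin rfl k = i := by
    rw [hk, ← Finset.coe_orderIsoOfFin_apply, OrderIso.apply_symm_apply]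
  have hmem : i ∈ IndAlph (sconc l₁ l₂) := by rw [hS]; exact Finset.mem_union_left _ h
  have hK : (A ∪ B).orderEmbOfFin (card_union_lt hlt) ⟨(k : ℕ), by have := k.isLt; omega⟩ = i := by
    rw [orderEmbOfFin_union hlt, dif_pos (by exact k.isLt)]
    simpa using hki
  rw [phi_eq hmem hS (card_union_lt hlt) hK, phi_eq h rfl rfl hki]

lemma phi_sconc_right {l₁ l₂ : List Mon} {i : ℕ} (h : i ∈ IndAlph l₂) :
    phi (sconc l₁ l₂) (i + maxInd l₁) = phi l₂ i + (IndAlph l₁).card := by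
  have hlt := sconc_lt l₁ l₂
  set A := IndAlph l₁ with hA
  set B := (IndAlph l₂).map (addEmb (maxInd l₁)) with hB
  have hS : IndAlph (sconc l₁ l₂) = A ∪ B := IndAlph_sconc l₁ l₂
  set k : Fin (IndAlph l₂).card := ((IndAlph l₂).orderIsoOfFin rfl).symm ⟨i, h⟩ with hk
  have hki : (IndAlph l₂).orderEmbOfFin rfl k = i := by
    rw [hk, ← Finset.coe_orderIsoOfFin_apply, OrderIso.apply_symm_apply]
  have hklt : (k : ℕ) < (IndAlph l₂).card := k.isLt
  have hBcard : B.card = (IndAlph l₂).card := Finset.card_map _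
  have hmem : i + maxInd l₁ ∈ IndAlph (sconc l₁ l₂) := by
    rw [hS]
    exact Finset.mem_union_right _ (Finset.mem_map.mpr ⟨i, h, rfl⟩)
  have hK : (A ∪ B).orderEmbOfFin (card_union_lt hlt) ⟨A.card + (k : ℕ), by omega⟩ =
      i + maxInd l₁ := by
    rw [orderEmbOfFin_union hlt, dif_neg (by simp)]
    refine ((Finset.orderEmbOfFin_eq_orderEmbOfFin_iff (h' := hBcard) (j := k)).mpr
      (by simp)).trans ?_
    exact (orderEmbOfFin_map_addEmb (IndAlph l₂) (maxInd l₁) k).trans (by rw [hki])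
  rw [phi_eq hmem hS (card_union_lt hlt) hK, phi_eq h rfl rfl hki]
  show A.card + (k : ℕ) + 1 = (k : ℕ) + 1 + A.card
  omega

lemma IndAlph_cpt (l : List Mon) :
    IndAlph (cpt l) = Finset.Icc 1 (IndAlph l).card := by
  classical
  have himg : IndAlph (cpt l) = (IndAlph l).image (phi l) := by
    ext i
    rw [mem_IndAlph]
    simp only [cpt, List.mem_map, Finset.mem_image]
    constructor
    · rintro ⟨_, ⟨m, hm, rfl⟩, hi⟩
      rw [cptMon] at hi
      simp only at hi
      rw [Finsupp.mapDomain_support_of_injective (phi_inj l)] at hi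
      obtain ⟨j, hj, rfl⟩ := Finset.mem_image.mp hi
      exact ⟨j, supp_subset_IndAlph hm hj, rfl⟩
    · rintro ⟨j, hj, rfl⟩
      obtain ⟨m, hm, hjm⟩ := mem_IndAlph.mp hj
      refine ⟨cptMon l m, ⟨m, hm, rfl⟩, ?_⟩
      rw [cptMon]
      simp only
      rw [Finsupp.mapDomain_support_of_injective (phi_inj l)]
      exact Finset.mem_image_of_mem _ hjm
  rw [himg]
  ext j
  simp only [Finset.mem_image, Finset.mem_Icc]
  constructor
  · rintro ⟨i, hi, rfl⟩
    rw [phi, dif_pos hi]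
    have := ((((IndAlph l).orderIsoOfFin rfl).symm ⟨i, hi⟩ : Fin _)).isLt
    omega
  · rintro ⟨h1, h2⟩
    refine ⟨(IndAlph l).orderEmbOfFin rfl ⟨j - 1, by omega⟩,
      Finset.orderEmbOfFin_mem _ _ _, ?_⟩
    rw [phi_eq (Finset.orderEmbOfFin_mem _ _ _) rfl rfl rfl]
    show j - 1 + 1 = j
    omega

lemma maxInd_cpt (l : List Mon) : maxInd (cpt l) = (IndAlph l).card := by
  rw [maxInd, IndAlph_cpt]
  rcases Nat.eq_zero_or_pos (IndAlph l).card with h | h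
  · simp [h]
  · apply le_antisymm
    · exact Finset.sup_le fun j hj => (Finset.mem_Icc.mp hj).2
    · exact Finset.le_sup (f := id) (Finset.mem_Icc.mpr ⟨h, le_refl _⟩)

end Mon

/-- ** Statement 6 **: the compacting operator is multiplicative for the
shifted concatenation. -/
theorem cpt_sconc (l₁ l₂ : List Mon) :
    Mon.cpt (Mon.sconc l₁ l₂) = Mon.sconc (Mon.cpt l₁) (Mon.cpt l₂) := by
  classical
  have hm1 : Mon.maxInd (Mon.cpt l₁) = (Mon.IndAlph l₁).card := Mon.maxInd_cpt l₁
  rw [Mon.cpt, Mon.sconc, Mon.sconc, List.map_append, List.map_map, Mon.cpt, Mon.cpt,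
    List.map_map]
  congr 1
  · apply List.map_congr_left
    intro m hm
    apply Subtype.ext
    show Finsupp.mapDomain _ _ = Finsupp.mapDomain _ _
    apply Finsupp.mapDomain_congr
    intro x hx
    exact Mon.phi_sconc_left (Mon.supp_subset_IndAlph hm hx)
  · apply List.map_congr_left
    intro m hm
    apply Subtype.ext
    show Finsupp.mapDomain (Mon.phi (Mon.sconc l₁ l₂)) ((Mon.Tmon (Mon.maxInd l₁) m).1) =
      Finsupp.embDomain (Mon.addEmb (Mon.maxInd (Mon.cpt l₁))) (Finsupp.mapDomain (Mon.phi l₂) m.1)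
    rw [Finsupp.embDomain_eq_mapDomain]
    show Finsupp.mapDomain _ (Finsupp.embDomain (Mon.addEmb (Mon.maxInd l₁)) m.1) = _
    rw [Finsupp.embDomain_eq_mapDomain, ← Finsupp.mapDomain_comp, ← Finsupp.mapDomain_comp]
    apply Finsupp.mapDomain_congr
    intro x hx
    show Mon.phi (Mon.sconc l₁ l₂) (x + Mon.maxInd l₁) = Mon.phi l₂ x + Mon.maxInd (Mon.cpt l₁)
    rw [hm1]
    exact Mon.phi_sconc_right (Mon.supp_subset_IndAlph hm hx)
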